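/- Let (X,d) be a metric space, v : X → ℝ bounded below, G : X → [0,∞) a Borel strong upper gradient of v, and set ℓ := v + (1/2)G². Let γ : [0,∞) → X be continuous, admitting a locally square-integrable upper speed m : [0,∞) → [0,∞) (its restriction to each compact interval is an upper speed of the restricted curve), and with G∘γ locally square-integrable. Then ∫_0^∞ e^{−t} ( (1/2) m(t)² + ℓ(γ(t)) ) dt ≥ v(γ(0)), where the integral is well-defined in (−∞,+∞] since the integrand is bounded below by t ↦ e^{−t} · inf v. -/

import Mathlib

open MeasureTheory Set Filter
open scoped ENNReal

noncomputable section

/-- `m` is a (nonnegative, integrable) upper speed of the curve `γ` on `[a,b]`: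
`dist (γ s) (γ t) ≤ ∫_s^t m` for all `a ≤ s ≤ t ≤ b`. -/
def IsUpperSpeedOn {X : Type*} [MetricSpace X] (γ : ℝ → X) (m : ℝ → ℝ) (a b : ℝ) : Prop :=
  (∀ r ∈ Set.Icc a b, 0 ≤ m r) ∧
  IntervalIntegrable m MeasureTheory.volume a b ∧
  ∀ s t : ℝ, a ≤ s → s ≤ t → t ≤ b → dist (γ s) (γ t) ≤ ∫ r in s..t, m r

/-- The Finsler cost `d_G(x,y)`: the infimum of `∫_0^1 m(t) G(γ(t)) dt` over continuous
curves `γ : [0,1] → X` joining `x` to `y` with integrable upper speed `m`;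
`+∞` if no admissible pair exists. -/
def finslerCost {X : Type*} [MetricSpace X] (G : X → ℝ) (x y : X) : ℝ≥0∞ :=
  sInf { c : ℝ≥0∞ | ∃ γ : ℝ → X, ∃ m : ℝ → ℝ,
    ContinuousOn γ (Set.Icc 0 1) ∧ γ 0 = x ∧ γ 1 = y ∧
    IsUpperSpeedOn γ m 0 1 ∧
    c = ∫⁻ t in Set.Ioc (0:ℝ) 1, ENNReal.ofReal (m t * G (γ t)) }

/-- The action `E_G^T(x,y)`: the infimum of `∫_0^T ((1/2) m(t)² + (1/2) G(γ(t))²) dt` over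
continuous curves `γ : [0,T] → X` joining `x` to `y` with square-integrable upper speed `m`;
`+∞` if no admissible pair exists. -/
def actionCost {X : Type*} [MetricSpace X] (G : X → ℝ) (T : ℝ) (x y : X) : ℝ≥0∞ :=
  sInf { c : ℝ≥0∞ | ∃ γ : ℝ → X, ∃ m : ℝ → ℝ,
    ContinuousOn γ (Set.Icc 0 T) ∧ γ 0 = x ∧ γ T = y ∧
    IsUpperSpeedOn γ m 0 T ∧
    IntervalIntegrable (fun t => (m t) ^ 2) MeasureTheory.volume 0 T ∧
    c = ∫⁻ t in Set.Ioc (0:ℝ) T,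
          ENNReal.ofReal ((1/2) * (m t) ^ 2 + (1/2) * (G (γ t)) ^ 2) }

/-- `G` is a strong upper gradient of `v`: along every continuous curve with integrable
upper speed `m`, `|v(γ t) − v(γ s)| ≤ ∫_s^t G(γ r) m(r) dr` (the right-hand side taken as a
possibly infinite nonnegative integral). -/
def IsStrongUpperGradient {X : Type*} [MetricSpace X] (G v : X → ℝ) : Prop :=
  ∀ (a b : ℝ) (γ : ℝ → X) (m : ℝ → ℝ),
    ContinuousOn γ (Set.Icc a b) → IsUpperSpeedOn γ m a b →
    ∀ s t : ℝ, a ≤ s → s ≤ t → t ≤ b →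
      ENNReal.ofReal |v (γ t) - v (γ s)| ≤
        ∫⁻ r in Set.Ioc s t, ENNReal.ofReal (G (γ r) * m r)

/-- A gradient-flow curve (curve of maximal slope in energy-dissipation form) of `v` with
respect to `G`: `η` is continuous on `[0,∞)`, `G∘η` is square-integrable on compacts and is
an upper speed of `η` on every compact subinterval of `[0,∞)`, and the energy-dissipation
equality `v(η s) − v(η t) = ∫_s^t G(η r)² dr` holds for `0 ≤ s ≤ t`. -/
def IsGradientFlowCurve {X : Type*} [MetricSpace X] (v G : X → ℝ) (η : ℝ → X) : Prop :=
  ContinuousOn η (Set.Ici 0) ∧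
  (∀ b : ℝ, 0 ≤ b → IntervalIntegrable (fun t => (G (η t)) ^ 2) MeasureTheory.volume 0 b) ∧
  (∀ a b : ℝ, 0 ≤ a → a ≤ b → IsUpperSpeedOn η (fun t => G (η t)) a b) ∧
  ∀ s t : ℝ, 0 ≤ s → s ≤ t → v (η s) - v (η t) = ∫ r in s..t, (G (η r)) ^ 2

/-- (Verification inequality.) Let `v` be bounded below (with lower bound
`B`), let `G : X → [0,∞)` be a Borel strong upper gradient of `v`, and set
`ℓ := v + (1/2)G²`. If `γ : [0,∞) → X` is continuous, `m` is a locally square-integrable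
upper speed of `γ`, and `G∘γ` is locally square-integrable, then
`∫_0^∞ e^{−t}((1/2)m(t)² + ℓ(γ t)) dt ≥ v(γ 0)`, formulated as: the integral of the
(nonnegative) shifted integrand dominates `v(γ 0) − B`. -/
theorem verification_inequality {X : Type*} [MetricSpace X] [MeasurableSpace X] [BorelSpace X]
    (v G : X → ℝ) (hG0 : ∀ x, 0 ≤ G x) (hGmeas : Measurable G)
    (hSUG : IsStrongUpperGradient G v)
    (B : ℝ) (hB : ∀ x : X, B ≤ v x)
    (γ : ℝ → X) (hγcont : ContinuousOn γ (Set.Ici 0))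
    (m : ℝ → ℝ)
    (hm : ∀ a b : ℝ, 0 ≤ a → a ≤ b → IsUpperSpeedOn γ m a b)
    (hm2 : ∀ b : ℝ, 0 ≤ b → IntervalIntegrable (fun t => (m t) ^ 2) MeasureTheory.volume 0 b)
    (hG2 : ∀ b : ℝ, 0 ≤ b →
      IntervalIntegrable (fun t => (G (γ t)) ^ 2) MeasureTheory.volume 0 b) :
    ENNReal.ofReal (v (γ 0) - B) ≤
      ∫⁻ t in Set.Ioi (0:ℝ),
        ENNReal.ofReal
          (Real.exp (-t) * ((1/2) * (m t) ^ 2 + (v (γ t) + (1/2) * (G (γ t)) ^ 2))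
            - Real.exp (-t) * B) := by
  classical
  set f : ℝ → ℝ := fun t => v (γ t) with hf
  set h : ℝ → ℝ := fun t => (1/2) * (m t)^2 + (1/2) * (G (γ t))^2 with hh
  have hh0 : ∀ t, 0 ≤ h t := fun t => by
    have := sq_nonneg (m t); have := sq_nonneg (G (γ t)); simp only [hh]; nlinarith
  have hhint : ∀ s : ℝ, 0 ≤ s → IntegrableOn h (Ioc 0 s) := by
    intro s hs
    exact (((hm2 s hs).const_mul (1/2)).add ((hG2 s hs).const_mul (1/2))).1
  set F : ℝ → ℝ := fun s => ∫ r in Ioc (0:ℝ) s, h r with hFdef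
  have hF0 : ∀ s, 0 ≤ F s := fun s =>
    setIntegral_nonneg measurableSet_Ioc (fun r _ => hh0 r)
  -- Step 1 : v (γ 0) - B ≤ F s + (f s - B) for s > 0
  have key : ∀ s : ℝ, 0 < s → v (γ 0) - B ≤ F s + (f s - B) := by
    intro s hs
    have hs' : (0:ℝ) ≤ s := hs.le
    have h1 := hSUG 0 s γ m (hγcont.mono (fun x hx => hx.1)) (hm 0 s le_rfl hs')
      0 s le_rfl hs' le_rfl
    have h2 : (∫⁻ r in Ioc (0:ℝ) s, ENNReal.ofReal (G (γ r) * m r)) ≤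
        ∫⁻ r in Ioc (0:ℝ) s, ENNReal.ofReal (h r) := by
      refine lintegral_mono_ae ((ae_restrict_iff' measurableSet_Ioc).2
        (Filter.Eventually.of_forall fun r hr => ?_))
      refine ENNReal.ofReal_le_ofReal ?_
      have hmr : 0 ≤ m r := (hm 0 s le_rfl hs').1 r (Ioc_subset_Icc_self hr)
      have hGr := hG0 (γ r)
      simp only [hh]
      nlinarith [sq_nonneg (G (γ r) - m r)]
    have h3 : (∫⁻ r in Ioc (0:ℝ) s, ENNReal.ofReal (h r)) = ENNReal.ofReal (F s) :=
      (ofReal_integral_eq_lintegral_ofReal (hhint s hs')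
        (Filter.Eventually.of_forall fun r => hh0 r)).symm
    have h5 : |v (γ s) - v (γ 0)| ≤ F s :=
      (ENNReal.ofReal_le_ofReal_iff (hF0 s)).1 (h1.trans (h2.trans_eq h3))
    have h6 : -(v (γ s) - v (γ 0)) ≤ |v (γ s) - v (γ 0)| := neg_le_abs _
    simp only [hf]
    linarith
  -- measurability of the density h on (0, ∞)
  have hγmeas : AEMeasurable γ (volume.restrict (Ioi 0)) :=
    (hγcont.mono Ioi_subset_Ici_self).aemeasurable measurableSet_Ioi
  have hGγ : AEMeasurable (fun t => G (γ t)) (volume.restrict (Ioi 0)) :=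
    hGmeas.comp_aemeasurable hγmeas
  have hm2meas : AEMeasurable (fun t => (m t)^2) (volume.restrict (Ioi 0)) := by
    have hU : Ioi (0:ℝ) = ⋃ n : ℕ, Ioc (0:ℝ) (n:ℝ) := by
      ext t
      simp only [mem_Ioi, mem_iUnion, mem_Ioc]
      constructor
      · intro ht; obtain ⟨n, hn⟩ := exists_nat_ge t; exact ⟨n, ht, hn⟩
      · rintro ⟨n, ht, -⟩; exact ht
    rw [hU, aemeasurable_iUnion_iff]
    intro n
    exact ((hm2 n (Nat.cast_nonneg n)).1.aestronglyMeasurable).aemeasurable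
  have hφ : AEMeasurable (fun t => ENNReal.ofReal (h t)) (volume.restrict (Ioi 0)) := by
    refine ENNReal.measurable_ofReal.comp_aemeasurable ?_
    have : AEMeasurable (fun t => (G (γ t))^2) (volume.restrict (Ioi 0)) := by
      have := hGγ.mul hGγ
      simpa [pow_two, Pi.mul_def] using this
    exact (aemeasurable_const.mul hm2meas).add (aemeasurable_const.mul this)
  set ψ : ℝ → ℝ≥0∞ := hφ.mk _ with hψdef
  have hψmeas : Measurable ψ := hφ.measurable_mk
  have hψeq : (fun t => ENNReal.ofReal (h t)) =ᵐ[volume.restrict (Ioi 0)] ψ := hφ.ae_eq_mk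
  set E : ℝ → ℝ≥0∞ := fun s => ENNReal.ofReal (Real.exp (-s)) with hEdef
  have hEmeas : Measurable E :=
    ENNReal.measurable_ofReal.comp ((Real.continuous_exp.comp continuous_neg).measurable)
  -- ∫⁻_{s > t} e^{-s} ds = e^{-t}
  have hexpint : ∀ t : ℝ, (∫⁻ s in Ioi t, E s) = ENNReal.ofReal (Real.exp (-t)) := by
    intro t
    have hint : IntegrableOn (fun x => Real.exp (-x)) (Ioi t) := by
      have := exp_neg_integrableOn_Ioi t (b := 1) one_pos
      simpa using this
    rw [hEdef, ← ofReal_integral_eq_lintegral_ofReal hint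
      (Filter.Eventually.of_forall fun x => (Real.exp_pos _).le), integral_exp_neg_Ioi]
  -- Tonelli on the triangle {0 < t < s}
  set K : ℝ → ℝ → ℝ≥0∞ := fun t s => (Ioi t).indicator (fun s' => ψ t * E s') s with hKdef
  have hKmeas : Measurable (Function.uncurry K) := by
    have hKeq : Function.uncurry K = fun p : ℝ × ℝ =>
        if p.1 < p.2 then ψ p.1 * E p.2 else 0 := by
      ext p
      simp [Function.uncurry, hKdef, Set.indicator, mem_Ioi]
    rw [hKeq]
    exact Measurable.ite (measurableSet_lt measurable_fst measurable_snd)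
      ((hψmeas.comp measurable_fst).mul (hEmeas.comp measurable_snd)) measurable_const
  have hswap : (∫⁻ t in Ioi (0:ℝ), ∫⁻ s in Ioi (0:ℝ), K t s) =
      ∫⁻ s in Ioi (0:ℝ), ∫⁻ t in Ioi (0:ℝ), K t s :=
    lintegral_lintegral_swap hKmeas.aemeasurable
  have hleft : (∫⁻ t in Ioi (0:ℝ), E t * ψ t) =
      ∫⁻ t in Ioi (0:ℝ), ∫⁻ s in Ioi (0:ℝ), K t s := by
    refine (setLIntegral_congr_fun measurableSet_Ioi
      (fun t ht => ?_)).symm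
    calc (∫⁻ s in Ioi (0:ℝ), K t s)
        = ∫⁻ s in Ioi t, ψ t * E s := by
          rw [hKdef, lintegral_indicator measurableSet_Ioi,
            Measure.restrict_restrict measurableSet_Ioi,
            Set.inter_eq_self_of_subset_left (Ioi_subset_Ioi (le_of_lt ht))]
      _ = ψ t * ∫⁻ s in Ioi t, E s := lintegral_const_mul _ hEmeas
      _ = ψ t * ENNReal.ofReal (Real.exp (-t)) := by rw [hexpint t]
      _ = E t * ψ t := mul_comm _ _
  set Φ : ℝ → ℝ≥0∞ := fun s => ∫⁻ t in Ioc (0:ℝ) s, ψ t with hΦdef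
  have hΦmono : Monotone Φ := by
    intro s₁ s₂ hs
    exact lintegral_mono' (Measure.restrict_mono (Ioc_subset_Ioc_right hs) le_rfl) le_rfl
  have hΦmeas : Measurable Φ := hΦmono.measurable
  have hright : (∫⁻ s in Ioi (0:ℝ), ∫⁻ t in Ioi (0:ℝ), K t s) =
      ∫⁻ s in Ioi (0:ℝ), Φ s * E s := by
    refine setLIntegral_congr_fun measurableSet_Ioi
      (fun s _ => ?_)
    have hKs : (fun t => K t s) = (Iio s).indicator (fun t => ψ t * E s) := by
      ext t
      simp [hKdef, Set.indicator, mem_Ioi, mem_Iio]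
    calc (∫⁻ t in Ioi (0:ℝ), K t s)
        = ∫⁻ t in Ioo (0:ℝ) s, ψ t * E s := by
          rw [hKs, lintegral_indicator measurableSet_Iio,
            Measure.restrict_restrict measurableSet_Iio, Set.Iio_inter_Ioi]
      _ = (∫⁻ t in Ioo (0:ℝ) s, ψ t) * E s := lintegral_mul_const _ hψmeas
      _ = Φ s * E s := by rw [hΦdef, setLIntegral_congr Ioo_ae_eq_Ioc]
  have hΦF : ∀ s : ℝ, 0 < s → Φ s = ENNReal.ofReal (F s) := by
    intro s hs
    have e1 : (∫⁻ t in Ioc (0:ℝ) s, ψ t) = ∫⁻ t in Ioc (0:ℝ) s, ENNReal.ofReal (h t) :=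
      (lintegral_congr_ae
        (ae_restrict_of_ae_restrict_of_subset Ioc_subset_Ioi_self hψeq)).symm
    show (∫⁻ t in Ioc (0:ℝ) s, ψ t) = ENNReal.ofReal (F s)
    rw [e1, ← ofReal_integral_eq_lintegral_ofReal (hhint s hs.le)
      (Filter.Eventually.of_forall fun r => hh0 r)]
  -- main chain
  calc ENNReal.ofReal (v (γ 0) - B)
      = ENNReal.ofReal (v (γ 0) - B) * ∫⁻ s in Ioi (0:ℝ), E s := by
        rw [hexpint 0]; simp
    _ = ∫⁻ s in Ioi (0:ℝ), ENNReal.ofReal (v (γ 0) - B) * E s :=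
        (lintegral_const_mul _ hEmeas).symm
    _ ≤ ∫⁻ s in Ioi (0:ℝ), (Φ s * E s + E s * ENNReal.ofReal (f s - B)) := by
        refine lintegral_mono_ae ((ae_restrict_iff' measurableSet_Ioi).2
          (Filter.Eventually.of_forall fun s hs => ?_))
        rw [hΦF s hs]
        have h1 : ENNReal.ofReal (v (γ 0) - B) ≤
            ENNReal.ofReal (F s) + ENNReal.ofReal (f s - B) := by
          rw [← ENNReal.ofReal_add (hF0 s) (sub_nonneg.2 (hB (γ s)))]
          exact ENNReal.ofReal_le_ofReal (key s hs)
        calc ENNReal.ofReal (v (γ 0) - B) * E s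
            ≤ (ENNReal.ofReal (F s) + ENNReal.ofReal (f s - B)) * E s :=
              mul_le_mul_left h1 _
          _ = ENNReal.ofReal (F s) * E s + E s * ENNReal.ofReal (f s - B) := by
              rw [add_mul, mul_comm (ENNReal.ofReal (f s - B))]
    _ = (∫⁻ s in Ioi (0:ℝ), Φ s * E s) + ∫⁻ s in Ioi (0:ℝ), E s * ENNReal.ofReal (f s - B) :=
        lintegral_add_left (hΦmeas.mul hEmeas) _
    _ = (∫⁻ t in Ioi (0:ℝ), E t * ψ t) + ∫⁻ t in Ioi (0:ℝ), E t * ENNReal.ofReal (f t - B) := by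
        rw [hleft, hswap, hright]
    _ = ∫⁻ t in Ioi (0:ℝ), (E t * ψ t + E t * ENNReal.ofReal (f t - B)) :=
        (lintegral_add_left (hEmeas.mul hψmeas) _).symm
    _ = ∫⁻ t in Ioi (0:ℝ),
          (E t * ENNReal.ofReal (h t) + E t * ENNReal.ofReal (f t - B)) := by
        refine lintegral_congr_ae ?_
        filter_upwards [hψeq] with t hψt
        rw [hψt]
    _ = ∫⁻ t in Ioi (0:ℝ),
          ENNReal.ofReal
            (Real.exp (-t) * ((1/2) * (m t) ^ 2 + (v (γ t) + (1/2) * (G (γ t)) ^ 2))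
              - Real.exp (-t) * B) := by
        refine setLIntegral_congr_fun measurableSet_Ioi
          (fun t _ => ?_)
        have harith : Real.exp (-t) * ((1/2) * (m t) ^ 2 + (v (γ t) + (1/2) * (G (γ t)) ^ 2))
            - Real.exp (-t) * B = Real.exp (-t) * (h t + (f t - B)) := by
          simp only [hh, hf]; ring
        rw [harith, ENNReal.ofReal_mul (Real.exp_pos _).le,
          ENNReal.ofReal_add (hh0 t) (sub_nonneg.2 (hB (γ t))), mul_add]
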